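/- The image under Re of the closed hyperbolic disc in S of hyperbolic radius λ(r) = ln((1+r)/(1-r)) centered at 0 is exactly the interval [-(4/π)arctan r, (4/π)arctan r]. -/

import Mathlib

open Complex Set

/-- The strip `S = {z : -1 < Re z < 1}`. -/
def stripS : Set ℂ := {z : ℂ | -1 < z.re ∧ z.re < 1}

/-- The unit disc. -/
def discU : Set ℂ := {z : ℂ | ‖z‖ < 1}

/-- Hyperbolic density of the strip. -/
noncomputable def rhoS (z : ℂ) : ℝ := (Real.pi / 2) / Real.cos (Real.pi / 2 * z.re)

/-- Hyperbolic density of the unit disc. -/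
noncomputable def rhoU (z : ℂ) : ℝ := 2 / (1 - ‖z‖ ^ 2)

/-- Hyperbolic length of a curve in the strip. -/
noncomputable def hypLenS (γ : ℝ → ℂ) : ℝ := ∫ t in (0:ℝ)..1, rhoS (γ t) * ‖deriv γ t‖

/-- Hyperbolic length of a curve in the disc. -/
noncomputable def hypLenU (γ : ℝ → ℂ) : ℝ := ∫ t in (0:ℝ)..1, rhoU (γ t) * ‖deriv γ t‖

/-- Hyperbolic distance on the strip: infimum of hyperbolic lengths of C¹ curves. -/
noncomputable def dS (z₁ z₂ : ℂ) : ℝ :=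
  sInf { L : ℝ | ∃ γ : ℝ → ℂ, ContDiffOn ℝ 1 γ (Icc 0 1) ∧ γ 0 = z₁ ∧ γ 1 = z₂ ∧
    (∀ t ∈ Icc (0:ℝ) 1, γ t ∈ stripS) ∧ L = hypLenS γ }

/-- Hyperbolic distance on the unit disc. -/
noncomputable def dU (z₁ z₂ : ℂ) : ℝ :=
  sInf { L : ℝ | ∃ γ : ℝ → ℂ, ContDiffOn ℝ 1 γ (Icc 0 1) ∧ γ 0 = z₁ ∧ γ 1 = z₂ ∧
    (∀ t ∈ Icc (0:ℝ) 1, γ t ∈ discU) ∧ L = hypLenU γ }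

/-- The conformal map of the disc onto the strip, inverse of `z ↦ tan (π z / 4)`. -/
noncomputable def phiUS (z : ℂ) : ℂ :=
  (-(2 * Complex.I) / (Real.pi : ℂ)) * Complex.log ((1 + Complex.I * z) / (1 - Complex.I * z))

/-- Inverse hyperbolic tangent. -/
noncomputable def artanh (r : ℝ) : ℝ := Real.log ((1 + r) / (1 - r)) / 2

/-- A real-valued function is harmonic on a set. -/
def HarmonicOnR (u : ℂ → ℝ) (s : Set ℂ) : Prop :=
  ContDiffOn ℝ 2 u s ∧ ∀ z ∈ s,
    fderiv ℝ (fun w => fderiv ℝ u w 1) z 1 + fderiv ℝ (fun w => fderiv ℝ u w Complex.I) z Complex.I = 0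

/-- A complex-valued function is harmonic on a set. -/
def HarmonicOnC (f : ℂ → ℂ) (s : Set ℂ) : Prop :=
  ContDiffOn ℝ 2 f s ∧ ∀ z ∈ s,
    fderiv ℝ (fun w => fderiv ℝ f w 1) z 1 + fderiv ℝ (fun w => fderiv ℝ f w Complex.I) z Complex.I = 0

/-- Wirtinger derivative ∂f/∂z. -/
noncomputable def wderiv (f : ℂ → ℂ) (z : ℂ) : ℂ :=
  (fderiv ℝ f z 1 - Complex.I * fderiv ℝ f z Complex.I) / 2

/-- Wirtinger derivative ∂f/∂z̄. -/
noncomputable def wderivBar (f : ℂ → ℂ) (z : ℂ) : ℂ :=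
  (fderiv ℝ f z 1 + Complex.I * fderiv ℝ f z Complex.I) / 2

/-- Sense-preserving K-quasiregular C¹ map on a set. -/
def QRegOn (K : ℝ) (f : ℂ → ℂ) (s : Set ℂ) : Prop :=
  ContDiffOn ℝ 1 f s ∧ ∀ z ∈ s,
    ‖wderivBar f z‖ < ‖wderiv f z‖ ∧
    ‖wderiv f z‖ + ‖wderivBar f z‖
      ≤ K * (‖wderiv f z‖ - ‖wderivBar f z‖)

section Aux

open Real Set

noncomputable def Fm (x : ℝ) : ℝ := Real.log (Real.tan (Real.pi/4 * x + Real.pi/4))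

lemma u_mem {x : ℝ} (hx : x ∈ Set.Ioo (-1:ℝ) 1) :
    Real.pi/4 * x + Real.pi/4 ∈ Set.Ioo 0 (Real.pi/2) := by
  have hpi := Real.pi_pos
  constructor <;> nlinarith [hx.1, hx.2]

lemma cos_half_pos {x : ℝ} (hx : x ∈ Set.Ioo (-1:ℝ) 1) :
    0 < Real.cos (Real.pi/2 * x) := by
  have hpi := Real.pi_pos
  apply Real.cos_pos_of_mem_Ioo
  constructor <;> nlinarith [hx.1, hx.2]

lemma Fm_hasDerivAt {x : ℝ} (hx : x ∈ Set.Ioo (-1:ℝ) 1) :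
    HasDerivAt Fm ((Real.pi/2) / Real.cos (Real.pi/2 * x)) x := by
  have hpi := Real.pi_pos
  obtain ⟨hu1, hu2⟩ := u_mem hx
  have hcos : 0 < Real.cos (Real.pi/4 * x + Real.pi/4) :=
    Real.cos_pos_of_mem_Ioo ⟨by linarith, hu2⟩
  have hsin : 0 < Real.sin (Real.pi/4 * x + Real.pi/4) :=
    Real.sin_pos_of_pos_of_lt_pi hu1 (by linarith)
  have htan : 0 < Real.tan (Real.pi/4 * x + Real.pi/4) := by
    rw [Real.tan_eq_sin_div_cos]; positivity
  have hA : HasDerivAt (fun y : ℝ => Real.pi/4 * y + Real.pi/4) (Real.pi/4) x := by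
    simpa using ((hasDerivAt_id x).const_mul (Real.pi/4)).add_const (Real.pi/4)
  have htan' : HasDerivAt (fun y : ℝ => Real.tan (Real.pi/4 * y + Real.pi/4))
      (1 / Real.cos (Real.pi/4 * x + Real.pi/4) ^ 2 * (Real.pi/4)) x :=
    by exact (Real.hasDerivAt_tan hcos.ne').comp x hA
  have hlog : HasDerivAt Fm ((Real.tan (Real.pi/4 * x + Real.pi/4))⁻¹ *
      (1 / Real.cos (Real.pi/4 * x + Real.pi/4) ^ 2 * (Real.pi/4))) x :=
    (Real.hasDerivAt_log htan.ne').comp x htan'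
  convert hlog using 1
  have h2u : Real.cos (Real.pi/2 * x)
      = 2 * Real.sin (Real.pi/4 * x + Real.pi/4) * Real.cos (Real.pi/4 * x + Real.pi/4) := by
    have h3 : Real.pi/2 * x + Real.pi/2 = 2 * (Real.pi/4 * x + Real.pi/4) := by ring
    rw [← Real.sin_add_pi_div_two, h3, Real.sin_two_mul]
  rw [h2u, Real.tan_eq_sin_div_cos]
  have key : ∀ s c : ℝ, s ≠ 0 → c ≠ 0 →
      Real.pi/2 / (2*s*c) = (s/c)⁻¹ * (1/c^2*(Real.pi/4)) := by
    intro s c hs hc; field_simp; ring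
  exact key _ _ hsin.ne' hcos.ne'

lemma Fm_zero : Fm 0 = 0 := by
  simp [Fm, Real.tan_pi_div_four]

lemma Fm_neg (x : ℝ) : Fm (-x) = - Fm x := by
  have : Real.pi/4 * (-x) + Real.pi/4 = Real.pi/2 - (Real.pi/4 * x + Real.pi/4) := by ring
  rw [Fm, this, Real.tan_pi_div_two_sub, Real.log_inv, Fm]

lemma Fm_strictMonoOn : StrictMonoOn Fm (Set.Ioo (-1:ℝ) 1) := by
  apply strictMonoOn_of_deriv_pos (convex_Ioo _ _)
  · intro x hx
    exact (Fm_hasDerivAt hx).continuousAt.continuousWithinAt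
  · intro x hx
    rw [interior_Ioo] at hx
    rw [(Fm_hasDerivAt hx).deriv]
    have := cos_half_pos hx
    positivity

lemma Fm_nonneg {x : ℝ} (hx : x ∈ Set.Icc (0:ℝ) 1) (hx1 : x < 1) : 0 ≤ Fm x := by
  rcases eq_or_lt_of_le hx.1 with h | h
  · rw [← h, Fm_zero]
  · have := Fm_strictMonoOn (by constructor <;> norm_num : (0:ℝ) ∈ Set.Ioo (-1:ℝ) 1)
      ⟨by linarith, hx1⟩ h
    rw [Fm_zero] at this
    linarith

lemma Fm_abs {x : ℝ} (hx : x ∈ Set.Ioo (-1:ℝ) 1) : |Fm x| = Fm |x| := by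
  rcases le_or_gt 0 x with h | h
  · rw [_root_.abs_of_nonneg h, _root_.abs_of_nonneg (Fm_nonneg ⟨h, hx.2.le⟩ hx.2)]
  · rw [_root_.abs_of_neg h, Fm_neg]
    have h0 : 0 ≤ Fm (-x) := Fm_nonneg ⟨by linarith, by linarith [hx.1]⟩ (by linarith [hx.1])
    rw [Fm_neg] at h0
    exact _root_.abs_of_nonpos (by linarith)

lemma c_mem {r : ℝ} (hr : r ∈ Set.Ioo (0:ℝ) 1) :
    (4/Real.pi) * Real.arctan r ∈ Set.Ioo (0:ℝ) 1 := by
  have hpi := Real.pi_pos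
  have h1 : 0 < Real.arctan r := by
    have := Real.arctan_strictMono (show (0:ℝ) < r from hr.1)
    simpa [Real.arctan_zero] using this
  have h2 : Real.arctan r < Real.pi/4 := by
    have := Real.arctan_strictMono hr.2
    simpa [Real.arctan_one] using this
  constructor
  · positivity
  · calc (4/Real.pi) * Real.arctan r < (4/Real.pi) * (Real.pi/4) := by
          apply mul_lt_mul_of_pos_left h2 (by positivity)
      _ = 1 := by field_simp
  
lemma Fm_c {r : ℝ} (hr : r ∈ Set.Ioo (0:ℝ) 1) :
    Fm ((4/Real.pi) * Real.arctan r) = Real.log ((1 + r) / (1 - r)) := by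
  have hpi := Real.pi_pos
  have harg : Real.pi/4 * ((4/Real.pi) * Real.arctan r) + Real.pi/4
      = Real.arctan r + Real.pi/4 := by field_simp
  rw [Fm, harg]
  congr 1
  have hc : 0 < Real.cos (Real.arctan r) := Real.cos_arctan_pos r
  have hs : Real.sin (Real.arctan r) = r * Real.cos (Real.arctan r) := by
    rw [Real.sin_arctan, Real.cos_arctan]; ring
  rw [Real.tan_eq_sin_div_cos, Real.sin_add, Real.cos_add, Real.sin_pi_div_four,
    Real.cos_pi_div_four, hs]
  have hsq : (0:ℝ) < Real.sqrt 2 := by positivity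
  have hr1 : (0:ℝ) < 1 - r := by linarith [hr.2]
  have hden : 0 < Real.cos (Real.arctan r) * (Real.sqrt 2 / 2)
      - r * Real.cos (Real.arctan r) * (Real.sqrt 2 / 2) := by
    nlinarith [mul_pos (mul_pos hc hsq) hr1]
  rw [div_eq_div_iff hden.ne' (by linarith : (1:ℝ) - r ≠ 0)]
  ring

end Aux
section Aux2
open Real Set

lemma rhoS_nonneg {z : ℂ} (hz : z ∈ stripS) : 0 ≤ rhoS z := by
  have h := cos_half_pos (show z.re ∈ Set.Ioo (-1:ℝ) 1 from ⟨hz.1, hz.2⟩)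
  have := Real.pi_pos
  unfold rhoS
  positivity

lemma hypLen_mem_nonneg {z w : ℂ} {L : ℝ}
    (hL : L ∈ { L : ℝ | ∃ γ : ℝ → ℂ, ContDiffOn ℝ 1 γ (Icc 0 1) ∧ γ 0 = z ∧ γ 1 = w ∧
      (∀ t ∈ Icc (0:ℝ) 1, γ t ∈ stripS) ∧ L = hypLenS γ }) : 0 ≤ L := by
  obtain ⟨γ, -, -, -, hmem, rfl⟩ := hL
  apply intervalIntegral.integral_nonneg zero_le_one
  intro t ht
  exact mul_nonneg (rhoS_nonneg (hmem t ht)) (norm_nonneg _)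

/-- Continuity of `rhoS ∘ γ` on a set where `γ` stays in the strip. -/
lemma rhoS_comp_continuousOn {γ : ℝ → ℂ} {s : Set ℝ} (hγ : ContinuousOn γ s)
    (hmem : ∀ t ∈ s, γ t ∈ stripS) :
    ContinuousOn (fun t => rhoS (γ t)) s := by
  unfold rhoS
  apply continuousOn_const.div
  · exact Real.continuous_cos.comp_continuousOn
      ((continuous_const.mul Complex.continuous_re).comp_continuousOn hγ)
  · intro t ht
    exact (cos_half_pos ⟨(hmem t ht).1, (hmem t ht).2⟩).ne'

/-- Key lower bound: the hyperbolic length of any admissible curve from `z` to `0`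
is at least `Fm |z.re|`. -/
lemma length_ge {z : ℂ} (hz : z ∈ stripS) {γ : ℝ → ℂ}
    (hγ : ContDiffOn ℝ 1 γ (Set.Icc 0 1)) (h0 : γ 0 = z) (h1 : γ 1 = 0)
    (hs : ∀ t ∈ Set.Icc (0:ℝ) 1, γ t ∈ stripS) :
    Fm |z.re| ≤ hypLenS γ := by
  set s : Set ℝ := Set.Icc 0 1 with hsdef
  have hu : UniqueDiffOn ℝ s := uniqueDiffOn_Icc one_pos
  set D : ℝ → ℂ := derivWithin γ s with hD
  have hDc : ContinuousOn D s := hγ.continuousOn_derivWithin hu le_rfl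
  have hγc : ContinuousOn γ s := hγ.continuousOn
  have hρc : ContinuousOn (fun t => rhoS (γ t)) s := rhoS_comp_continuousOn hγc hs
  -- continuous version of the integrand
  set h : ℝ → ℝ := fun t => rhoS (γ t) * ‖D t‖ with hh
  have hhc : ContinuousOn h s := hρc.mul hDc.norm
  have hne : ∀ t ∈ Set.Ioo (0:ℝ) 1, deriv γ t = D t := by
    intro t ht
    exact (derivWithin_of_mem_nhds (Icc_mem_nhds ht.1 ht.2)).symm
  have hlen : hypLenS γ = ∫ t in (0:ℝ)..1, h t := by
    apply intervalIntegral.integral_congr_ae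
    have h1ae : ∀ᵐ (t : ℝ), t ≠ (1:ℝ) := by
      rw [Filter.eventually_iff, MeasureTheory.mem_ae_iff]
      convert Real.volume_singleton (a := (1:ℝ)) using 2
      ext t; simp
    filter_upwards [h1ae] with t ht htmem
    rw [Set.uIoc_of_le zero_le_one] at htmem
    have : t ∈ Set.Ioo (0:ℝ) 1 := ⟨htmem.1, lt_of_le_of_ne htmem.2 ht⟩
    rw [hne t this]
  -- the comparison function g
  set g : ℝ → ℝ := fun t => Fm ((γ t).re) with hg
  set g' : ℝ → ℝ := fun t => rhoS (γ t) * (D t).re with hg'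
  have hg'c : ContinuousOn g' s := hρc.mul (Complex.continuous_re.comp_continuousOn hDc)
  have hFmc : ContinuousOn Fm (Set.Ioo (-1:ℝ) 1) := fun x hx =>
    (Fm_hasDerivAt hx).continuousAt.continuousWithinAt
  have hgc : ContinuousOn g s := by
    apply hFmc.comp (Complex.continuous_re.comp_continuousOn hγc)
    intro t ht
    exact ⟨(hs t ht).1, (hs t ht).2⟩
  have hder : ∀ t ∈ Set.Ioo (0:ℝ) 1, HasDerivAt g (g' t) t := by
    intro t ht
    have hnb : s ∈ nhds t := Icc_mem_nhds ht.1 ht.2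
    have hdiff : DifferentiableAt ℝ γ t :=
      (hγ.differentiableOn one_ne_zero t (Set.Ioo_subset_Icc_self ht)).differentiableAt hnb
    have hdγ : HasDerivAt γ (D t) t := by
      rw [hD, derivWithin_of_mem_nhds hnb]
      exact hdiff.hasDerivAt
    have hre : HasDerivAt (fun t => (γ t).re) ((D t).re) t :=
      Complex.reCLM.hasFDerivAt.comp_hasDerivAt t hdγ
    have hmem : (γ t).re ∈ Set.Ioo (-1:ℝ) 1 :=
      ⟨(hs t (Set.Ioo_subset_Icc_self ht)).1, (hs t (Set.Ioo_subset_Icc_self ht)).2⟩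
    have : HasDerivAt (fun t => Fm (γ t).re) ((Real.pi/2) / Real.cos (Real.pi/2 * (γ t).re) * (D t).re) t := by
      exact HasDerivAt.comp (h₂ := Fm) t (Fm_hasDerivAt hmem) hre
    simpa [rhoS, hg', mul_comm] using this
  have hint : IntervalIntegrable g' MeasureTheory.volume 0 1 := by
    apply ContinuousOn.intervalIntegrable
    rwa [Set.uIcc_of_le zero_le_one]
  have hftc : ∫ t in (0:ℝ)..1, g' t = g 1 - g 0 :=
    intervalIntegral.integral_eq_sub_of_hasDeriv_right_of_le zero_le_one hgc
      (fun t ht => (hder t ht).hasDerivWithinAt) hint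
  have hval : g 1 - g 0 = - Fm z.re := by
    simp [hg, h0, h1, Fm_zero]
  have habs : |∫ t in (0:ℝ)..1, g' t| ≤ ∫ t in (0:ℝ)..1, |g' t| :=
    intervalIntegral.abs_integral_le_integral_abs zero_le_one
  have hmono : (∫ t in (0:ℝ)..1, |g' t|) ≤ ∫ t in (0:ℝ)..1, h t := by
    apply intervalIntegral.integral_mono_on zero_le_one
    · apply ContinuousOn.intervalIntegrable
      rw [Set.uIcc_of_le zero_le_one]
      exact hg'c.abs
    · apply ContinuousOn.intervalIntegrable
      rwa [Set.uIcc_of_le zero_le_one]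
    · intro t ht
      rw [hg', hh, abs_mul, _root_.abs_of_nonneg (rhoS_nonneg (hs t ht))]
      apply mul_le_mul_of_nonneg_left _ (rhoS_nonneg (hs t ht))
      simpa using Complex.abs_re_le_norm (D t)
  have hzre : z.re ∈ Set.Ioo (-1:ℝ) 1 := ⟨hz.1, hz.2⟩
  calc Fm |z.re| = |Fm z.re| := (Fm_abs hzre).symm
    _ = |∫ t in (0:ℝ)..1, g' t| := by rw [hftc, hval, abs_neg]
    _ ≤ ∫ t in (0:ℝ)..1, |g' t| := habs
    _ ≤ ∫ t in (0:ℝ)..1, h t := hmono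
    _ = hypLenS γ := hlen.symm

end Aux2
section Aux3
open Real Set

lemma segment_contDiff' (x : ℝ) : ContDiffOn ℝ 1 (fun t : ℝ => (((1 - t) * x : ℝ) : ℂ)) (Set.Icc 0 1) := by
  apply ContDiff.contDiffOn
  exact Complex.ofRealCLM.contDiff.comp ((contDiff_const.sub contDiff_id).mul contDiff_const)

lemma segment_contDiff (z : ℂ) : ContDiffOn ℝ 1 (fun t : ℝ => ((1 - t : ℝ) : ℂ) * z) (Set.Icc 0 1) := by
  apply ContDiff.contDiffOn
  exact (Complex.ofRealCLM.contDiff.comp (contDiff_const.sub contDiff_id)).mul contDiff_const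

lemma segment_mem_strip {z : ℂ} (hz : z ∈ stripS) :
    ∀ t ∈ Set.Icc (0:ℝ) 1, ((1 - t : ℝ) : ℂ) * z ∈ stripS := by
  intro t ht
  have h1 := hz.1; have h2 := hz.2
  have hre : (((1 - t : ℝ) : ℂ) * z).re = (1 - t) * z.re := by
    simp [Complex.mul_re]
  constructor <;> rw [hre] <;> nlinarith [ht.1, ht.2]

lemma dS_set_nonempty (z : ℂ) (hz : z ∈ stripS) :
    { L : ℝ | ∃ γ : ℝ → ℂ, ContDiffOn ℝ 1 γ (Icc 0 1) ∧ γ 0 = z ∧ γ 1 = 0 ∧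
      (∀ t ∈ Icc (0:ℝ) 1, γ t ∈ stripS) ∧ L = hypLenS γ }.Nonempty := by
  refine ⟨hypLenS (fun t : ℝ => ((1 - t : ℝ) : ℂ) * z), _, segment_contDiff z, by simp, by simp,
    segment_mem_strip hz, rfl⟩

lemma dS_ge {z : ℂ} (hz : z ∈ stripS) : Fm |z.re| ≤ dS z 0 := by
  unfold dS
  apply le_csInf (dS_set_nonempty z hz)
  rintro L ⟨γ, hγ, h0, h1, hs, rfl⟩
  exact length_ge hz hγ h0 h1 hs

lemma dS_ofReal_le {x : ℝ} (hx : |x| < 1) : dS (x : ℂ) 0 ≤ Fm |x| := by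
  set γ : ℝ → ℂ := fun t => (((1 - t) * x : ℝ) : ℂ) with hγdef
  have hx1 : -1 < x := (abs_lt.mp hx).1
  have hx2 : x < 1 := (abs_lt.mp hx).2
  have hd : ∀ t : ℝ, HasDerivAt γ (((-x : ℝ) : ℂ)) t := by
    intro t
    have h2 : HasDerivAt (fun t : ℝ => (1 - t)) (-1) t := by
      simpa using (hasDerivAt_id t).const_sub (1:ℝ)
    have h1 : HasDerivAt (fun t : ℝ => (1 - t) * x) (-x) t := by
      simpa using h2.mul_const x
    exact h1.ofReal_comp
  have hderiv : deriv γ = fun _ : ℝ => ((-x : ℝ) : ℂ) := funext fun t => (hd t).deriv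
  have hmemIoo : ∀ t ∈ Set.Icc (0:ℝ) 1, (1 - t) * |x| ∈ Set.Ioo (-1:ℝ) 1 := by
    intro t ht
    have := abs_nonneg x
    constructor <;> nlinarith [ht.1, ht.2]
  have hstrip : ∀ t ∈ Set.Icc (0:ℝ) 1, γ t ∈ stripS := by
    intro t ht
    have hre : (γ t).re = (1 - t) * x := by simp [hγdef]
    constructor <;> rw [hre] <;> nlinarith [ht.1, ht.2]
  have hcos_eq : ∀ t : ℝ, 0 ≤ 1 - t →
      Real.cos (Real.pi/2 * ((1 - t) * x)) = Real.cos (Real.pi/2 * ((1 - t) * |x|)) := by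
    intro t ht
    rw [← Real.cos_abs (Real.pi/2 * ((1 - t) * x)), abs_mul, abs_mul,
      _root_.abs_of_nonneg (by positivity : (0:ℝ) ≤ Real.pi/2), _root_.abs_of_nonneg ht]
  have hG : ∀ t ∈ Set.uIcc (0:ℝ) 1, HasDerivAt (fun t => - Fm ((1 - t) * |x|))
      (rhoS (γ t) * ‖deriv γ t‖) t := by
    intro t ht
    rw [Set.uIcc_of_le zero_le_one] at ht
    have hinner : HasDerivAt (fun t : ℝ => (1 - t) * |x|) (-|x|) t := by
      have h2 : HasDerivAt (fun t : ℝ => (1 - t)) (-1) t := by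
        simpa using (hasDerivAt_id t).const_sub (1:ℝ)
      simpa using h2.mul_const |x|
    have hFm := (Fm_hasDerivAt (hmemIoo t ht)).comp t hinner
    have : HasDerivAt (fun t => - Fm ((1 - t) * |x|))
        (-((Real.pi/2) / Real.cos (Real.pi/2 * ((1 - t) * |x|)) * -|x|)) t := by exact hFm.neg
    convert this using 1
    have hnorm : ‖deriv γ t‖ = |x| := by
      rw [hderiv]; simp
    rw [hnorm]
    unfold rhoS
    have hre : (γ t).re = (1 - t) * x := by simp [hγdef]
    rw [hre, hcos_eq t (by linarith [ht.1, ht.2])]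
    ring
  have hint : IntervalIntegrable (fun t => rhoS (γ t) * ‖deriv γ t‖) MeasureTheory.volume 0 1 := by
    apply ContinuousOn.intervalIntegrable
    rw [Set.uIcc_of_le zero_le_one]
    have hγc : ContinuousOn γ (Set.Icc 0 1) := (segment_contDiff' x).continuousOn
    exact (rhoS_comp_continuousOn hγc hstrip).mul (by rw [hderiv]; exact continuousOn_const.norm)
  have hlen : hypLenS γ = Fm |x| := by
    unfold hypLenS
    rw [intervalIntegral.integral_eq_sub_of_hasDerivAt hG hint]
    norm_num [Fm_zero]
  have hmem : hypLenS γ ∈ { L : ℝ | ∃ γ : ℝ → ℂ, ContDiffOn ℝ 1 γ (Icc 0 1) ∧ γ 0 = (x:ℂ) ∧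
      γ 1 = 0 ∧ (∀ t ∈ Icc (0:ℝ) 1, γ t ∈ stripS) ∧ L = hypLenS γ } :=
    ⟨γ, segment_contDiff' x, by simp [hγdef], by simp [hγdef], hstrip, rfl⟩
  have hbdd : BddBelow { L : ℝ | ∃ γ : ℝ → ℂ, ContDiffOn ℝ 1 γ (Icc 0 1) ∧ γ 0 = (x:ℂ) ∧
      γ 1 = 0 ∧ (∀ t ∈ Icc (0:ℝ) 1, γ t ∈ stripS) ∧ L = hypLenS γ } :=
    ⟨0, fun L hL => hypLen_mem_nonneg hL⟩
  calc dS (x:ℂ) 0 ≤ hypLenS γ := csInf_le hbdd hmem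
    _ = Fm |x| := hlen

end Aux3

/-- the image under `Re` of the closed hyperbolic disc of radius
`λ(r)` centered at `0` in the strip is exactly `[-(4/π)arctan r, (4/π)arctan r]`. -/
theorem re_image_hyperbolic_disc (r : ℝ) (hr : r ∈ Set.Ioo (0:ℝ) 1) :
    Complex.re '' {z : ℂ | z ∈ stripS ∧ dS z 0 ≤ Real.log ((1 + r) / (1 - r))}
      = Set.Icc (-((4 / Real.pi) * Real.arctan r)) ((4 / Real.pi) * Real.arctan r) := by
  have hπ := Real.pi_pos
  set c := (4 / Real.pi) * Real.arctan r with hc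
  have hcm : c ∈ Set.Ioo (0:ℝ) 1 := c_mem hr
  have hcIoo : c ∈ Set.Ioo (-1:ℝ) 1 := ⟨by linarith [hcm.1], hcm.2⟩
  have hFc : Fm c = Real.log ((1 + r) / (1 - r)) := Fm_c hr
  ext x
  simp only [Set.mem_image, Set.mem_setOf_eq, Set.mem_Icc]
  constructor
  · rintro ⟨z, ⟨hz, hd⟩, rfl⟩
    have hge : Fm |z.re| ≤ Fm c := by
      rw [hFc]; exact le_trans (dS_ge hz) hd
    have hzre : |z.re| < 1 := abs_lt.mpr ⟨hz.1, hz.2⟩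
    have hle : |z.re| ≤ c := by
      by_contra h
      push_neg at h
      have := Fm_strictMonoOn hcIoo ⟨by linarith [abs_nonneg z.re], hzre⟩ h
      linarith
    exact abs_le.mp hle
  · intro hx
    have hxc : |x| ≤ c := abs_le.mpr hx
    have hx1 : |x| < 1 := lt_of_le_of_lt hxc hcm.2
    refine ⟨(x:ℂ), ⟨⟨?_, ?_⟩, ?_⟩, Complex.ofReal_re x⟩
    · simpa using (abs_lt.mp hx1).1
    · simpa using (abs_lt.mp hx1).2
    · calc dS (x:ℂ) 0 ≤ Fm |x| := dS_ofReal_le hx1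
        _ ≤ Fm c := by
            rcases eq_or_lt_of_le hxc with h | h
            · rw [h]
            · exact (Fm_strictMonoOn ⟨by linarith [abs_nonneg x], hx1⟩ hcIoo h).le
        _ = _ := hFc
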